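/- Let p be a prime, k ≥ 1, and G_{p,k} = C_{p^∞} × C_k × 𝕋, where C_{p^∞} is the Prüfer p-group with the discrete topology, C_k is the cyclic group of order k with the discrete topology, and 𝕋 is the circle group. For a finite subgroup F of C_k × 𝕋, let q_F : G_{p,k} → G_{p,k}/({1} × F) denote the quotient map, and identify G_{p,k}/({1} × F) with C_{p^∞} × ((C_k × 𝕋)/F). For a continuous homomorphism f : C_{p^∞} → (C_k × 𝕋)/F, set H_{F,f} := q_F^{-1}({(w, f(w)) : w ∈ C_{p^∞}}). Then H_{F,f} is an infinite discrete (closed) subgroup of G_{p,k}, and conversely every infinite discrete closed subgroup of G_{p,k} equals H_{F,f} for some finite subgroup F of C_k × 𝕋 and some continuous homomorphism f : C_{p^∞} → (C_k × 𝕋)/F. -/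

import Mathlib

/-- The subgroup `C_n` of `n`-th roots of unity in the circle group `𝕋`. -/
noncomputable def circleRoots (n : ℕ) : Subgroup Circle where
  carrier := {z | z ^ n = 1}
  one_mem' := one_pow n
  mul_mem' := by
    intro a b ha hb
    simp only [Set.mem_setOf_eq] at *
    rw [mul_pow, ha, hb, mul_one]
  inv_mem' := by
    intro a ha
    simp only [Set.mem_setOf_eq] at *
    rw [inv_pow, ha, inv_one]

/-- The subgroup of all `p`-power roots of unity in the circle group `𝕋`. -/
noncomputable def pruferSubgroup (p : ℕ) : Subgroup Circle where
  carrier := {z | ∃ ℓ : ℕ, z ^ p ^ ℓ = 1}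
  one_mem' := ⟨0, one_pow _⟩
  mul_mem' := by
    rintro a b ⟨la, ha⟩ ⟨lb, hb⟩
    refine ⟨la + lb, ?_⟩
    rw [mul_pow, pow_add, pow_mul, ha, one_pow, mul_comm (p ^ la), pow_mul, hb, one_pow,
      one_mul]
  inv_mem' := by
    rintro a ⟨l, h⟩
    exact ⟨l, by rw [inv_pow, h, inv_one]⟩

/-- The Prüfer `p`-group `C_{p^∞}`: the group of all `p`-power roots of unity in `𝕋`,
endowed with the *discrete* topology. -/
def Prufer (p : ℕ) : Type := ↥(pruferSubgroup p)

noncomputable instance (p : ℕ) : CommGroup (Prufer p) := inferInstanceAs (CommGroup ↥(pruferSubgroup p))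

instance (p : ℕ) : TopologicalSpace (Prufer p) := ⊥

instance (p : ℕ) : DiscreteTopology (Prufer p) := ⟨rfl⟩

instance (p : ℕ) : IsTopologicalGroup (Prufer p) where
  continuous_mul := continuous_of_discreteTopology
  continuous_inv := continuous_of_discreteTopology

/-- The graph of a group homomorphism `f : P →* Q`, as a subgroup of `P × Q`. -/
def MonoidHom.graphSubgroup {P Q : Type*} [Group P] [Group Q] (f : P →* Q) :
    Subgroup (P × Q) where
  carrier := {x | x.2 = f x.1}
  one_mem' := by simp
  mul_mem' := by
    rintro x y hx hy
    simp only [Set.mem_setOf_eq, Prod.fst_mul, Prod.snd_mul, map_mul] at *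
    rw [hx, hy]
  inv_mem' := by
    rintro x hx
    simp only [Set.mem_setOf_eq, Prod.fst_inv, Prod.snd_inv, map_inv] at *
    rw [hx]


open scoped Real

lemma circle_coe_pow (z : Circle) (n : ℕ) : ((z ^ n : Circle) : ℂ) = (z : ℂ) ^ n :=
  map_pow Circle.coeHom z n

lemma circleRootsSet_finite {n : ℕ} (hn : n ≠ 0) :
    ((circleRoots n : Subgroup Circle) : Set Circle).Finite := by
  have h : Set.InjOn (fun z : Circle => (z : ℂ)) ((circleRoots n : Subgroup Circle) : Set Circle) :=
    fun a _ b _ h => Circle.coe_injective h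
  refine Set.Finite.of_finite_image (Set.Finite.subset
    (Polynomial.nthRootsFinset n (1 : ℂ)).finite_toSet ?_) h
  rintro x ⟨z, hz, rfl⟩
  rw [Finset.mem_coe, Polynomial.mem_nthRootsFinset (Nat.pos_of_ne_zero hn)]
  have hz' : z ^ n = 1 := hz
  rw [← circle_coe_pow, hz']; rfl

lemma circleRoots_card_le {n : ℕ} (hn : n ≠ 0) : Nat.card ↥(circleRoots n) ≤ n := by
  refine le_trans (Nat.card_le_card_of_injective (fun z : ↥(circleRoots n) =>
    (⟨(z : Circle), by
      rw [Polynomial.mem_nthRootsFinset (Nat.pos_of_ne_zero hn)]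
      have hz' : (z : Circle) ^ n = 1 := z.2
      rw [← circle_coe_pow, hz']; rfl⟩ : ↥(Polynomial.nthRootsFinset n (1 : ℂ)))) ?_) ?_
  · intro a b hab
    simp only [Subtype.mk.injEq] at hab
    exact Subtype.ext (Circle.coe_injective hab)
  · calc Nat.card ↥(Polynomial.nthRootsFinset n (1 : ℂ))
        = (Polynomial.nthRootsFinset n (1 : ℂ)).card := Nat.card_eq_finsetCard _
      _ ≤ Multiset.card (Polynomial.nthRoots n (1 : ℂ)) := by
          rw [Polynomial.nthRootsFinset]; exact Multiset.toFinset_card_le _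
      _ ≤ n := Polynomial.card_nthRoots n 1

noncomputable def zeta (n : ℕ) : Circle := Circle.exp (2 * π / n)

lemma coe_zeta (n : ℕ) : (zeta n : ℂ) = Complex.exp (2 * ↑π * Complex.I / n) := by
  rw [zeta, Circle.coe_exp]
  congr 1
  push_cast
  ring

lemma zeta_pow_eq_one {n : ℕ} (hn : n ≠ 0) : (zeta n) ^ n = 1 := by
  apply Circle.coe_injective
  rw [circle_coe_pow, coe_zeta]
  exact (Complex.isPrimitiveRoot_exp n hn).pow_eq_one

lemma zeta_pow_ne_one {n l : ℕ} (hn : n ≠ 0) (h0 : 0 < l) (hl : l < n) : (zeta n) ^ l ≠ 1 := by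
  intro h
  apply (Complex.isPrimitiveRoot_exp n hn).pow_ne_one_of_pos_of_lt h0.ne' hl
  rw [← coe_zeta, ← circle_coe_pow, h]
  rfl

lemma prufer_infinite (p : ℕ) (hp : p.Prime) : Infinite (Prufer p) := by
  show Infinite ↥(pruferSubgroup p)
  have hmem : ∀ ℓ : ℕ, zeta (p ^ ℓ) ∈ pruferSubgroup p := fun ℓ =>
    ⟨ℓ, zeta_pow_eq_one (pow_ne_zero ℓ hp.ne_zero)⟩
  refine Infinite.of_injective (fun ℓ : ℕ => (⟨zeta (p ^ ℓ), hmem ℓ⟩ : ↥(pruferSubgroup p))) ?_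
  intro a b hab
  simp only [Subtype.mk.injEq] at hab
  by_contra hne
  wlog h : a < b generalizing a b
  · exact this hab.symm (Ne.symm hne) ((Ne.lt_or_gt hne).resolve_left h)
  apply zeta_pow_ne_one (pow_ne_zero b hp.ne_zero)
    (pow_pos hp.pos a) (Nat.pow_lt_pow_right hp.one_lt h)
  rw [← hab]
  exact zeta_pow_eq_one (pow_ne_zero a hp.ne_zero)

lemma circleRoots_eq_zpowers {n : ℕ} (hn : n ≠ 0) {a : Circle} (ha : orderOf a = n) :
    (circleRoots n : Set Circle) = (Subgroup.zpowers a : Set Circle) := by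
  have hle : Subgroup.zpowers a ≤ circleRoots n :=
    Subgroup.zpowers_le.mpr (by show a ^ n = 1; rw [← ha]; exact pow_orderOf_eq_one a)
  refine (Set.eq_of_subset_of_ncard_le hle ?_ (circleRootsSet_finite hn)).symm
  rw [← Nat.card_coe_set_eq, ← Nat.card_coe_set_eq]
  calc Nat.card ↥((circleRoots n : Set Circle)) = Nat.card ↥(circleRoots n) := rfl
    _ ≤ n := circleRoots_card_le hn
    _ = Nat.card (Subgroup.zpowers a) := by rw [Nat.card_zpowers, ha]
    _ = Nat.card ↥((Subgroup.zpowers a : Set Circle)) := rfl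

lemma prufer_subgroup_eq_top {p : ℕ} (hp : p.Prime) (A : Subgroup (Prufer p))
    (hA : (A : Set (Prufer p)).Infinite) : A = ⊤ := by
  rw [eq_top_iff]
  rintro w -
  obtain ⟨ℓ, hw⟩ := w.2
  -- find a ∈ A with a.val ^ (p ^ ℓ) ≠ 1
  have hBfin : {x : Prufer p | x.val ^ (p ^ ℓ) = 1}.Finite := by
    have := (circleRootsSet_finite (pow_ne_zero ℓ hp.ne_zero)).preimage
      (f := fun x : Prufer p => x.val)
      (fun x _ y _ h => Subtype.ext h)
    exact this.subset (fun x hx => hx)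
  obtain ⟨a, haA, haB⟩ := (hA.diff hBfin).nonempty
  obtain ⟨n, han⟩ := a.2
  obtain ⟨m, hmn, hm⟩ := (Nat.dvd_prime_pow hp).mp (orderOf_dvd_of_pow_eq_one han)
  have hℓm : ℓ < m := by
    by_contra h
    exact haB (orderOf_dvd_iff_pow_eq_one.mp (hm ▸ pow_dvd_pow p (not_lt.mp h)))
  have hwm : w.val ^ (p ^ m) = 1 := by
    have : p ^ m = p ^ ℓ * p ^ (m - ℓ) := by
      rw [← pow_add, Nat.add_sub_cancel' hℓm.le]
    rw [this, pow_mul, hw, one_pow]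
  have hmem : w.val ∈ Subgroup.zpowers a.val := by
    rw [← SetLike.mem_coe, ← circleRoots_eq_zpowers (pow_ne_zero m hp.ne_zero) hm]
    exact hwm
  obtain ⟨j, hj⟩ := hmem
  have hcz : (a ^ j : Prufer p).val = a.val ^ j := rfl
  have : w = a ^ j := Subtype.ext (by rw [hcz]; exact hj.symm)
  rw [this]
  exact Subgroup.zpow_mem A haA j


/-- In `G_{p,k} = C_{p^∞} × C_k × 𝕋`, for every finite subgroup `F ≤ C_k × 𝕋` and every
continuous homomorphism `f : C_{p^∞} → (C_k × 𝕋)/F`, the subgroup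
`H_{F,f} = q_F⁻¹(Graph f)` is an infinite discrete closed subgroup, and conversely every
infinite discrete closed subgroup of `G_{p,k}` is of this form. Here
`q_F : G_{p,k} → C_{p^∞} × ((C_k × 𝕋)/F)` is the quotient map by `{1} × F`. -/
theorem infinite_discrete_subgroups_eq_graphs (p k : ℕ) (hp : p.Prime) (hk : 1 ≤ k) :
    (∀ F : Subgroup (↥(circleRoots k) × Circle),
      (F : Set (↥(circleRoots k) × Circle)).Finite →
      ∀ f : Prufer p →* (↥(circleRoots k) × Circle) ⧸ F, Continuous f →
        ((Subgroup.comap ((MonoidHom.id (Prufer p)).prodMap (QuotientGroup.mk' F))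
            f.graphSubgroup : Set (Prufer p × ↥(circleRoots k) × Circle)).Infinite ∧
        DiscreteTopology
          (Subgroup.comap ((MonoidHom.id (Prufer p)).prodMap (QuotientGroup.mk' F))
            f.graphSubgroup) ∧
        IsClosed (Subgroup.comap ((MonoidHom.id (Prufer p)).prodMap (QuotientGroup.mk' F))
            f.graphSubgroup : Set (Prufer p × ↥(circleRoots k) × Circle)))) ∧
    (∀ H : Subgroup (Prufer p × ↥(circleRoots k) × Circle),
      IsClosed (H : Set (Prufer p × ↥(circleRoots k) × Circle)) →
      (H : Set (Prufer p × ↥(circleRoots k) × Circle)).Infinite →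
      DiscreteTopology H →
        ∃ F : Subgroup (↥(circleRoots k) × Circle),
          (F : Set (↥(circleRoots k) × Circle)).Finite ∧
          ∃ f : Prufer p →* (↥(circleRoots k) × Circle) ⧸ F, Continuous f ∧
            H = Subgroup.comap ((MonoidHom.id (Prufer p)).prodMap (QuotientGroup.mk' F))
              f.graphSubgroup) := by
  have hk0 : k ≠ 0 := Nat.one_le_iff_ne_zero.mp hk
  haveI : Infinite (Prufer p) := prufer_infinite p hp
  haveI hCkfin : Finite ↥(circleRoots k) := (circleRootsSet_finite hk0).to_subtype
  constructor
  · intro F hF f hf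
    set q := (MonoidHom.id (Prufer p)).prodMap (QuotientGroup.mk' F) with hq
    set H := Subgroup.comap q f.graphSubgroup with hH
    have hmem : ∀ x : Prufer p × ↥(circleRoots k) × Circle,
        x ∈ H ↔ (QuotientGroup.mk x.2 : _ ⧸ F) = f x.1 := fun x => Iff.rfl
    refine ⟨?_, ?_, ?_⟩
    · -- infinite
      have hsurj : ∀ w : Prufer p, ∃ y, (w, y) ∈ H := by
        intro w
        obtain ⟨y, hy⟩ := QuotientGroup.mk'_surjective F (f w)
        exact ⟨y, hy⟩
      choose y hy using hsurj
      exact Set.infinite_of_injective_forall_mem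
        (f := fun w : Prufer p => (w, y w))
        (fun a b hab => congrArg Prod.fst hab) hy
    · -- discrete
      apply discreteTopology_of_isOpen_singleton_one
      have hT : {z : Circle | ((1 : ↥(circleRoots k)), z) ∈ F}.Finite :=
        hF.preimage (fun a _ b _ h => congrArg Prod.snd h)
      have hV : IsOpen ({z : Circle | ((1 : ↥(circleRoots k)), z) ∈ F} \ {1})ᶜ :=
        ((hT.diff).isClosed).isOpen_compl
      rw [isOpen_induced_iff]
      refine ⟨({1} : Set (Prufer p)) ×ˢ (({1} : Set ↥(circleRoots k)) ×ˢ
        ({z : Circle | ((1 : ↥(circleRoots k)), z) ∈ F} \ {1})ᶜ), ?_, ?_⟩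
      · exact (isOpen_discrete _).prod ((isOpen_discrete _).prod hV)
      · ext ⟨⟨w, c, z⟩, hx⟩
        simp only [Set.mem_preimage, Set.mem_prod, Set.mem_singleton_iff, Set.mem_compl_iff,
          Set.mem_diff, Set.mem_setOf_eq]
        constructor
        · rintro ⟨rfl, rfl, hz⟩
          have : (QuotientGroup.mk (((1 : ↥(circleRoots k)), z)) : _ ⧸ F) = 1 := by
            rw [(hmem _).mp hx, map_one]
          have hzF : ((1 : ↥(circleRoots k)), z) ∈ F := (QuotientGroup.eq_one_iff _).mp this
          have : z = 1 := by
            by_contra hz1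
            exact hz ⟨hzF, hz1⟩
          apply Subtype.ext
          show ((1 : Prufer p), (1 : ↥(circleRoots k)), z) = 1
          rw [this]
          rfl
        · intro h1
          have h2 : (w, c, z) = (1 : Prufer p × ↥(circleRoots k) × Circle) :=
            congrArg Subtype.val h1
          rw [Prod.ext_iff, Prod.ext_iff] at h2
          obtain ⟨h3, h4, h5⟩ := h2
          refine ⟨h3, h4, ?_⟩
          rintro ⟨-, h6⟩
          exact h6 h5
    · -- closed
      haveI : IsClosed (F : Set (↥(circleRoots k) × Circle)) := hF.isClosed
      have hgraph : IsClosed {x : Prufer p × ((↥(circleRoots k) × Circle) ⧸ F) | x.2 = f x.1} :=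
        isClosed_eq continuous_snd (hf.comp continuous_fst)
      have hqc : Continuous q := by
        exact continuous_id.prodMap QuotientGroup.continuous_mk
      exact hgraph.preimage hqc
  · intro H hHclosed hHinf hHdisc
    set ι : (↥(circleRoots k) × Circle) →* Prufer p × ↥(circleRoots k) × Circle :=
      MonoidHom.prod 1 (MonoidHom.id _) with hι
    set F := Subgroup.comap ι H with hF
    -- K is finite
    have hK : ((H : Set (Prufer p × ↥(circleRoots k) × Circle)) ∩
        ({1} ×ˢ Set.univ)).Finite := by
      have hcpt : IsCompact ((H : Set (Prufer p × ↥(circleRoots k) × Circle)) ∩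
          ({1} ×ˢ Set.univ)) :=
        (isCompact_singleton.prod isCompact_univ).of_isClosed_subset
          (hHclosed.inter (isClosed_singleton.prod isClosed_univ)) Set.inter_subset_right
      exact hcpt.finite (isDiscrete_iff_discreteTopology.mpr (DiscreteTopology.of_subset hHdisc Set.inter_subset_left))
    have hFfin : (F : Set (↥(circleRoots k) × Circle)).Finite := by
      have : (F : Set (↥(circleRoots k) × Circle)) ⊆
          (fun x : ↥(circleRoots k) × Circle => ((1 : Prufer p), x)) ⁻¹'
            ((H : Set _) ∩ ({1} ×ˢ Set.univ)) := by
        intro x hx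
        exact ⟨hx, rfl, trivial⟩
      exact (hK.preimage (fun a _ b _ h => congrArg Prod.snd h)).subset this
    -- the projection of H to Prufer p is everything
    have hsurj : ∀ w : Prufer p, ∃ y, (w, y) ∈ H := by
      have hAinf : ((Subgroup.map (MonoidHom.fst (Prufer p) (↥(circleRoots k) × Circle)) H :
          Subgroup (Prufer p)) : Set (Prufer p)).Infinite := by
        intro hAfin
        refine hHinf ?_
        have hsub : (H : Set (Prufer p × ↥(circleRoots k) × Circle)) ⊆
            ((Subgroup.map (MonoidHom.fst _ _) H : Subgroup (Prufer p)) : Set (Prufer p))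
              ×ˢ Set.univ := by
          rintro ⟨w, y⟩ hx
          exact ⟨⟨(w, y), hx, rfl⟩, trivial⟩
        have hcpt : IsCompact (H : Set (Prufer p × ↥(circleRoots k) × Circle)) :=
          (hAfin.isCompact.prod isCompact_univ).of_isClosed_subset hHclosed hsub
        exact hcpt.finite (SetLike.isDiscrete_iff_discreteTopology.mpr hHdisc)
      have := prufer_subgroup_eq_top hp _ hAinf
      intro w
      have hw : w ∈ Subgroup.map (MonoidHom.fst (Prufer p) (↥(circleRoots k) × Circle)) H := by
        rw [this]; trivial
      obtain ⟨⟨w', y⟩, hxy, rfl⟩ := hw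
      exact ⟨y, hxy⟩
    choose y hy using hsurj
    -- membership difference lemma
    have hdiff : ∀ (w : Prufer p) (y₁ y₂ : ↥(circleRoots k) × Circle),
        (w, y₁) ∈ H → (w, y₂) ∈ H → y₁⁻¹ * y₂ ∈ F := by
      intro w y₁ y₂ h1 h2
      have : ((w, y₁)⁻¹ * (w, y₂) : Prufer p × ↥(circleRoots k) × Circle) ∈ H :=
        H.mul_mem (H.inv_mem h1) h2
      have heq : ((w, y₁)⁻¹ * (w, y₂) : Prufer p × ↥(circleRoots k) × Circle)
          = ((1 : Prufer p), y₁⁻¹ * y₂) := by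
        rw [Prod.inv_mk, Prod.mk_mul_mk, inv_mul_cancel]
      rw [heq] at this
      exact this
    have hFmem : ∀ s ∈ F, ((1 : Prufer p), s) ∈ H := fun s hs => hs
    -- construct f
    refine ⟨F, hFfin, ⟨⟨⟨fun w => QuotientGroup.mk (y w), ?_⟩, ?_⟩, ?_, ?_⟩⟩
    · -- map_one
      show (QuotientGroup.mk (y 1) : _ ⧸ F) = 1
      rw [QuotientGroup.eq_one_iff]
      have := hdiff 1 1 (y 1) H.one_mem (hy 1)
      rwa [inv_one, one_mul] at this
    · -- map_mul
      intro a b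
      show (QuotientGroup.mk (y (a * b)) : _ ⧸ F) =
        QuotientGroup.mk (y a) * QuotientGroup.mk (y b)
      rw [← QuotientGroup.mk_mul]
      apply QuotientGroup.eq.mpr
      refine hdiff (a * b) (y (a * b)) (y a * y b) (hy (a * b)) ?_
      have : ((a, y a) * (b, y b) : Prufer p × ↥(circleRoots k) × Circle) ∈ H :=
        H.mul_mem (hy a) (hy b)
      exact this
    · exact continuous_of_discreteTopology
    · -- H = comap
      ext ⟨w, x⟩
      rw [Subgroup.mem_comap]
      show (w, x) ∈ H ↔ (QuotientGroup.mk x : _ ⧸ F) = QuotientGroup.mk (y w)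
      constructor
      · intro h
        exact (QuotientGroup.eq.mpr (hdiff w x (y w) h (hy w)))
      · intro h
        have hmemF : (y w)⁻¹ * x ∈ F := QuotientGroup.eq.mp h.symm
        have : ((w, y w) * ((1 : Prufer p), (y w)⁻¹ * x) :
            Prufer p × ↥(circleRoots k) × Circle) ∈ H :=
          H.mul_mem (hy w) (hFmem _ hmemF)
        have heq : ((w, y w) * ((1 : Prufer p), (y w)⁻¹ * x) :
            Prufer p × ↥(circleRoots k) × Circle) = (w, x) := by
          rw [Prod.mk_mul_mk, mul_one, mul_inv_cancel_left]
        rwa [heq] at this
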